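/- Let w ∈ C[0,1] ∩ H¹(0,1) with w(0) = w(1) = 0, and let 0 < ε < 1/2. Then ∫₀¹ w(t)²/(t(1−t)) dt ≤ 4ε |w|²_{H¹(0,1)} + C log(ε⁻¹) ‖w‖²_{L^∞(0,1)} for an absolute constant C (e.g., C = 4). -/

import Mathlib

open MeasureTheory intervalIntegral

lemma cs_aux (d : ℝ → ℝ) (a b : ℝ) (hab : a ≤ b)
    (h1 : IntervalIntegrable d volume a b)
    (h2 : IntervalIntegrable (fun t => (d t) ^ 2) volume a b) :
    (∫ s in a..b, d s) ^ 2 ≤ (b - a) * ∫ s in a..b, (d s) ^ 2 := by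
  rcases eq_or_lt_of_le hab with rfl | hlt
  · simp
  · have hL0 : (0:ℝ) < b - a := by linarith
    set I := ∫ s in a..b, d s with hI
    set J := ∫ s in a..b, (d s) ^ 2 with hJ
    set c := I / (b - a) with hc
    have key : 0 ≤ ∫ s in a..b, (d s - c) ^ 2 :=
      intervalIntegral.integral_nonneg hab (fun x _ => sq_nonneg _)
    have expand : ∫ s in a..b, (d s - c) ^ 2 = J - 2 * c * I + c ^ 2 * (b - a) := by
      have h3 : ∀ s, (d s - c) ^ 2 = (d s) ^ 2 - 2 * c * d s + c ^ 2 := fun s => by ring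
      simp_rw [h3]
      rw [intervalIntegral.integral_add (h2.sub (h1.const_mul _)) intervalIntegrable_const,
        intervalIntegral.integral_sub h2 (h1.const_mul _),
        intervalIntegral.integral_const_mul, intervalIntegral.integral_const, smul_eq_mul]
      ring
    rw [expand, hc] at key
    have h4 : J - 2 * (I / (b - a)) * I + (I / (b - a)) ^ 2 * (b - a) = J - I ^ 2 / (b - a) := by
      field_simp; ring
    rw [h4] at key
    have := (div_le_iff₀ hL0).mp (by linarith : I ^ 2 / (b - a) ≤ J)
    linarith

/-- For `w ∈ C[0,1] ∩ H¹(0,1)` with `w(0) = w(1) = 0` and `0 < ε < 1/2`: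
`∫₀¹ w(t)²/(t(1-t)) dt ≤ 4ε |w|²_{H¹} + 4 log(ε⁻¹) ‖w‖²_{L^∞}`.
Here `d = w'` and `M` is a bound for `‖w‖_{L^∞(0,1)}`. -/
theorem stmt11 (w d : ℝ → ℝ) (ε M : ℝ) (hε0 : 0 < ε) (hε : ε < 1 / 2)
    (hcont : ContinuousOn w (Set.Icc 0 1))
    (hInt : IntervalIntegrable d volume 0 1)
    (hsq : IntervalIntegrable (fun t => (d t) ^ 2) volume 0 1)
    (hftc : ∀ t ∈ Set.Icc (0:ℝ) 1, w t = ∫ s in (0:ℝ)..t, d s)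
    (hw1 : w 1 = 0)
    (hM : ∀ t ∈ Set.Icc (0:ℝ) 1, |w t| ≤ M) :
    (∫ t in (0:ℝ)..1, (w t) ^ 2 / (t * (1 - t))) ≤
      4 * ε * (∫ t in (0:ℝ)..1, (d t) ^ 2) + 4 * Real.log ε⁻¹ * M ^ 2 := by
  have hε1 : ε < 1 := by linarith
  have hεle : ε ≤ 1 - ε := by linarith
  set C := ∫ t in (0:ℝ)..1, (d t) ^ 2 with hCdef
  have hC0 : 0 ≤ C :=
    intervalIntegral.integral_nonneg (by norm_num) (fun x _ => sq_nonneg _)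
  set f : ℝ → ℝ := fun t => (w t) ^ 2 / (t * (1 - t)) with hfdef
  -- sub-integrability of d, d² on subintervals of [0,1]
  have hdsub : ∀ a b : ℝ, 0 ≤ a → b ≤ 1 → a ≤ b →
      IntervalIntegrable d volume a b ∧
      IntervalIntegrable (fun t => (d t) ^ 2) volume a b := by
    intro a b ha hb hab
    have hsub : Set.uIcc a b ⊆ Set.uIcc (0:ℝ) 1 := by
      rw [Set.uIcc_of_le hab, Set.uIcc_of_le (by norm_num : (0:ℝ) ≤ 1)]
      exact Set.Icc_subset_Icc ha hb
    exact ⟨hInt.mono_set hsub, hsq.mono_set hsub⟩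
  -- pointwise bound for w² near 0
  have hwsq0 : ∀ t ∈ Set.Icc (0:ℝ) 1, (w t) ^ 2 ≤ t * C := by
    intro t ht
    obtain ⟨h0, h1⟩ := ht
    rw [hftc t ⟨h0, h1⟩]
    obtain ⟨hd1, hd2⟩ := hdsub 0 t le_rfl h1 h0
    calc (∫ s in (0:ℝ)..t, d s) ^ 2 ≤ (t - 0) * ∫ s in (0:ℝ)..t, (d s) ^ 2 :=
          cs_aux d 0 t h0 hd1 hd2
      _ ≤ t * C := by
          rw [sub_zero]
          refine mul_le_mul_of_nonneg_left ?_ h0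
          exact intervalIntegral.integral_mono_interval le_rfl h0 h1
            (Filter.Eventually.of_forall fun x => sq_nonneg _) hsq
  -- pointwise bound for w² near 1
  have hwsq1 : ∀ t ∈ Set.Icc (0:ℝ) 1, (w t) ^ 2 ≤ (1 - t) * C := by
    intro t ht
    obtain ⟨h0, h1⟩ := ht
    obtain ⟨hd1, hd2⟩ := hdsub t 1 h0 le_rfl h1
    obtain ⟨hd1', hd2'⟩ := hdsub 0 t le_rfl h1 h0
    have hsplit : (∫ s in (0:ℝ)..t, d s) + ∫ s in t..1, d s = ∫ s in (0:ℝ)..1, d s :=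
      intervalIntegral.integral_add_adjacent_intervals hd1' hd1
    have hw1' : (∫ s in (0:ℝ)..1, d s) = 0 := by
      rw [← hftc 1 ⟨by norm_num, le_rfl⟩]; exact hw1
    have hwt : w t = -(∫ s in t..1, d s) := by
      rw [hftc t ⟨h0, h1⟩]; rw [hw1'] at hsplit; linarith
    rw [hwt, neg_pow]
    simp only [neg_neg, one_mul, neg_one_sq]
    calc (∫ s in t..1, d s) ^ 2 ≤ (1 - t) * ∫ s in t..1, (d s) ^ 2 :=
          cs_aux d t 1 h1 hd1 hd2
      _ ≤ (1 - t) * C := by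
          refine mul_le_mul_of_nonneg_left ?_ (by linarith)
          exact intervalIntegral.integral_mono_interval h0 h1 le_rfl
            (Filter.Eventually.of_forall fun x => sq_nonneg _) hsq
  -- pointwise bounds for f on the three pieces
  have hb1 : ∀ t ∈ Set.Icc (0:ℝ) ε, f t ≤ 2 * C := by
    intro t ⟨h0, h1⟩
    rcases eq_or_lt_of_le h0 with rfl | h0'
    · simp [hfdef]; positivity
    · have hden : 0 < t * (1 - t) := by nlinarith
      rw [hfdef]
      rw [div_le_iff₀ hden]
      have := hwsq0 t ⟨h0, by linarith⟩
      nlinarith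
  have hb3 : ∀ t ∈ Set.Icc (1 - ε) 1, f t ≤ 2 * C := by
    intro t ⟨h0, h1⟩
    rcases eq_or_lt_of_le h1 with rfl | h1'
    · simp [hfdef]; positivity
    · have hden : 0 < t * (1 - t) := by nlinarith
      rw [hfdef, div_le_iff₀ hden]
      have := hwsq1 t ⟨by linarith, h1⟩
      nlinarith
  have hb2 : ∀ t ∈ Set.Icc ε (1 - ε), f t ≤ M ^ 2 * (1 / t + 1 / (1 - t)) := by
    intro t ⟨h0, h1⟩
    have ht0 : 0 < t := lt_of_lt_of_le hε0 h0
    have ht1 : t < 1 := by linarith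
    have hden : 0 < t * (1 - t) := by nlinarith
    have hwM : (w t) ^ 2 ≤ M ^ 2 := by
      have := hM t ⟨ht0.le, ht1.le⟩
      calc (w t) ^ 2 = |w t| ^ 2 := (sq_abs _).symm
        _ ≤ M ^ 2 := by
            exact pow_le_pow_left₀ (abs_nonneg _) this 2
    rw [hfdef, div_le_iff₀ hden]
    have hid : (1 / t + 1 / (1 - t)) * (t * (1 - t)) = 1 := by
      have h1' : (1:ℝ) - t ≠ 0 := by linarith
      field_simp
      ring
    nlinarith
  -- measurability/integrability of f on the three pieces
  have hfc : ContinuousOn f (Set.Ioo (0:ℝ) 1) := by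
    apply ContinuousOn.div
    · exact (hcont.mono Set.Ioo_subset_Icc_self).pow 2
    · fun_prop
    · intro x hx
      obtain ⟨hx0, hx1⟩ := hx
      exact ne_of_gt (by nlinarith)
  have hi1 : IntervalIntegrable f volume 0 ε := by
    rw [intervalIntegrable_iff_integrableOn_Ioc_of_le hε0.le]
    refine ⟨(hfc.mono ?_).aestronglyMeasurable measurableSet_Ioc, ?_⟩
    · intro x ⟨hx0, hx1⟩; exact ⟨hx0, by linarith⟩
    · apply HasFiniteIntegral.restrict_of_bounded (C := 2 * C) measure_Ioc_lt_top
      filter_upwards [ae_restrict_mem measurableSet_Ioc] with x hx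
      obtain ⟨hx0, hx1⟩ := hx
      rw [Real.norm_eq_abs, abs_of_nonneg (div_nonneg (sq_nonneg _) (by nlinarith))]
      exact hb1 x ⟨hx0.le, hx1⟩
  have hi3 : IntervalIntegrable f volume (1 - ε) 1 := by
    rw [intervalIntegrable_iff_integrableOn_Ioc_of_le (by linarith)]
    rw [integrableOn_Ioc_iff_integrableOn_Ioo]
    refine ⟨(hfc.mono ?_).aestronglyMeasurable measurableSet_Ioo, ?_⟩
    · intro x ⟨hx0, hx1⟩; exact ⟨by linarith, hx1⟩
    · apply HasFiniteIntegral.restrict_of_bounded (C := 2 * C) measure_Ioo_lt_top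
      filter_upwards [ae_restrict_mem measurableSet_Ioo] with x hx
      obtain ⟨hx0, hx1⟩ := hx
      rw [Real.norm_eq_abs, abs_of_nonneg ?_]
      · exact hb3 x ⟨hx0.le, hx1.le⟩
      · exact div_nonneg (sq_nonneg _) (by nlinarith)
  have hi2 : IntervalIntegrable f volume ε (1 - ε) := by
    apply ContinuousOn.intervalIntegrable
    apply hfc.mono
    rw [Set.uIcc_of_le hεle]
    intro x ⟨hx0, hx1⟩
    exact ⟨by linarith, by linarith⟩
  -- split the integral
  have hsplit : (∫ t in (0:ℝ)..1, f t) =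
      (∫ t in (0:ℝ)..ε, f t) + (∫ t in ε..(1 - ε), f t) + ∫ t in (1 - ε)..1, f t := by
    rw [intervalIntegral.integral_add_adjacent_intervals hi1 hi2,
      intervalIntegral.integral_add_adjacent_intervals (hi1.trans hi2) hi3]
  -- estimate piece 1
  have he1 : (∫ t in (0:ℝ)..ε, f t) ≤ 2 * ε * C := by
    calc (∫ t in (0:ℝ)..ε, f t) ≤ ∫ _ in (0:ℝ)..ε, 2 * C :=
          intervalIntegral.integral_mono_on hε0.le hi1 intervalIntegrable_const hb1
      _ = 2 * ε * C := by
          rw [intervalIntegral.integral_const, smul_eq_mul]; ring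
  have he3 : (∫ t in (1 - ε)..1, f t) ≤ 2 * ε * C := by
    calc (∫ t in (1 - ε)..1, f t) ≤ ∫ _ in (1 - ε)..1, 2 * C :=
          intervalIntegral.integral_mono_on (by linarith) hi3 intervalIntegrable_const hb3
      _ = 2 * ε * C := by
          rw [intervalIntegral.integral_const, smul_eq_mul]; ring
  -- estimate middle piece
  have hg1 : IntervalIntegrable (fun t : ℝ => 1 / t) volume ε (1 - ε) := by
    apply ContinuousOn.intervalIntegrable
    apply ContinuousOn.div continuousOn_const continuousOn_id
    intro x hx
    rw [Set.uIcc_of_le hεle] at hx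
    exact ne_of_gt (lt_of_lt_of_le hε0 hx.1)
  have hg2 : IntervalIntegrable (fun t : ℝ => 1 / (1 - t)) volume ε (1 - ε) := by
    apply ContinuousOn.intervalIntegrable
    apply ContinuousOn.div continuousOn_const (by fun_prop)
    intro x hx
    rw [Set.uIcc_of_le hεle] at hx
    have : x ≤ 1 - ε := hx.2
    intro h; linarith [h]
  have hlog1 : (∫ t in ε..(1 - ε), 1 / t) = Real.log ((1 - ε) / ε) := by
    apply integral_one_div
    rw [Set.uIcc_of_le hεle]
    intro h
    exact absurd h.1 (by linarith)
  have hlog2 : (∫ t in ε..(1 - ε), 1 / (1 - t)) = Real.log ((1 - ε) / ε) := by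
    have := intervalIntegral.integral_comp_sub_left (a := ε) (b := 1 - ε)
      (fun x : ℝ => 1 / x) 1
    simp only [sub_sub_cancel] at this
    rw [this, hlog1]
  have hlogb : Real.log ((1 - ε) / ε) ≤ Real.log ε⁻¹ := by
    rw [Real.log_div (by linarith) (ne_of_gt hε0), Real.log_inv]
    have := Real.log_nonpos (by linarith) (by linarith : 1 - ε ≤ 1)
    linarith
  have hlog0 : 0 ≤ Real.log ε⁻¹ := Real.log_nonneg (by
    rw [le_inv_comm₀ one_pos hε0]; linarith)
  have he2 : (∫ t in ε..(1 - ε), f t) ≤ 2 * Real.log ε⁻¹ * M ^ 2 := by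
    have hgint : IntervalIntegrable (fun t : ℝ => M ^ 2 * (1 / t + 1 / (1 - t)))
        volume ε (1 - ε) := ((hg1.add hg2).const_mul _)
    calc (∫ t in ε..(1 - ε), f t)
        ≤ ∫ t in ε..(1 - ε), M ^ 2 * (1 / t + 1 / (1 - t)) :=
          intervalIntegral.integral_mono_on hεle hi2 hgint hb2
      _ = M ^ 2 * (2 * Real.log ((1 - ε) / ε)) := by
          rw [intervalIntegral.integral_const_mul,
            intervalIntegral.integral_add hg1 hg2, hlog1, hlog2]
          ring
      _ ≤ 2 * Real.log ε⁻¹ * M ^ 2 := by nlinarith [sq_nonneg M]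
  have := hsplit
  rw [hsplit]
  have hfC : (0:ℝ) ≤ Real.log ε⁻¹ * M ^ 2 := mul_nonneg hlog0 (sq_nonneg M)
  nlinarith [he1, he2, he3]
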